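/- For every integer N ≥ 2, 2·s₂(N) + e₂(N) ≤ 2·log₂(N - 2^⌊log₂(N-1)⌋ + 1) + 2. -/

import Mathlib

open Real

lemma ssum_two_mul (n : ℕ) (hn : 0 < n) :
    (Nat.digits 2 (2 * n)).sum = (Nat.digits 2 n).sum := by
  rw [Nat.digits_def' (by norm_num) (by omega)]
  simp [Nat.mul_div_cancel_left, Nat.mul_mod_right]

lemma ssum_two_mul_add_one (n : ℕ) :
    (Nat.digits 2 (2 * n + 1)).sum = (Nat.digits 2 n).sum + 1 := by
  rw [Nat.digits_def' (by norm_num) (by omega)]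
  simp [Nat.mul_add_div, Nat.mul_add_mod]
  ring

lemma padic_two_mul (n : ℕ) (hn : n ≠ 0) :
    padicValNat 2 (2 * n) = padicValNat 2 n + 1 := by
  haveI : Fact (Nat.Prime 2) := ⟨Nat.prime_two⟩
  rw [padicValNat.mul (p := 2) (by norm_num) hn, padicValNat.self (by norm_num)]
  omega

lemma padic_odd (n : ℕ) : padicValNat 2 (2 * n + 1) = 0 := by
  apply padicValNat.eq_zero_of_not_dvd
  omega

lemma ssum_pow (k : ℕ) : (Nat.digits 2 (2 ^ k)).sum = 1 := by
  induction k with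
  | zero => simp
  | succ k ih =>
    have : (2:ℕ) ^ (k+1) = 2 * 2 ^ k := by ring
    rw [this, ssum_two_mul _ (by positivity)]
    exact ih

lemma key : ∀ k m : ℕ, 1 ≤ m → m ≤ 2 ^ k →
    2 ^ (2 * (Nat.digits 2 (2 ^ k + m)).sum + padicValNat 2 (2 ^ k + m)) ≤ 4 * (m + 1) ^ 2 := by
  intro k
  induction k with
  | zero =>
    intro m h1 h2
    interval_cases m
    haveI : Fact (Nat.Prime 2) := ⟨Nat.prime_two⟩
    rw [show (2:ℕ)^0 + 1 = 2^1 from rfl, ssum_pow, padicValNat.prime_pow 1]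
    norm_num
  | succ k ih =>
    intro m h1 h2
    rcases Nat.even_or_odd m with ⟨j, hj⟩ | ⟨j, hj⟩
    · -- m = 2j
      have hj1 : 1 ≤ j := by omega
      have hj2 : j ≤ 2 ^ k := by
        have : (2:ℕ) ^ (k+1) = 2 * 2 ^ k := by ring
        omega
      have hN : 2 ^ (k+1) + m = 2 * (2 ^ k + j) := by
        rw [hj]; ring
      rw [hN, ssum_two_mul _ (by positivity), padic_two_mul _ (by positivity)]
      have := ih j hj1 hj2
      have h4 : 2 ^ (2 * (Nat.digits 2 (2 ^ k + j)).sum + padicValNat 2 (2 ^ k + j) + 1)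
          = 2 * 2 ^ (2 * (Nat.digits 2 (2 ^ k + j)).sum + padicValNat 2 (2 ^ k + j)) := by ring
      rw [show 2 * (Nat.digits 2 (2 ^ k + j)).sum + (padicValNat 2 (2 ^ k + j) + 1)
          = 2 * (Nat.digits 2 (2 ^ k + j)).sum + padicValNat 2 (2 ^ k + j) + 1 by ring, h4, hj]
      nlinarith
    · -- m = 2j+1
      have hN : 2 ^ (k+1) + m = 2 * (2 ^ k + j) + 1 := by
        rw [hj]; ring
      rw [hN, ssum_two_mul_add_one, padic_odd]
      have hkey : 2 ^ (2 * (Nat.digits 2 (2 ^ k + j)).sum) ≤ 4 * (j + 1) ^ 2 := by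
        rcases Nat.eq_zero_or_pos j with rfl | hj1
        · rw [Nat.add_zero, ssum_pow]; norm_num
        · have hj2 : j ≤ 2 ^ k := by
            have : (2:ℕ) ^ (k+1) = 2 * 2 ^ k := by ring
            omega
          calc 2 ^ (2 * (Nat.digits 2 (2 ^ k + j)).sum)
              ≤ 2 ^ (2 * (Nat.digits 2 (2 ^ k + j)).sum + padicValNat 2 (2 ^ k + j)) :=
                Nat.pow_le_pow_right (by norm_num) (by omega)
            _ ≤ 4 * (j + 1) ^ 2 := ih j hj1 hj2
      have hexp : 2 * ((Nat.digits 2 (2 ^ k + j)).sum + 1) + 0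
          = 2 * (Nat.digits 2 (2 ^ k + j)).sum + 2 := by ring
      rw [hexp, pow_add]
      have : (2:ℕ)^2 = 4 := by norm_num
      rw [hj]
      nlinarith

theorem stmt15 (N : ℕ) (hN : 2 ≤ N) :
    ((2 * (Nat.digits 2 N).sum + padicValNat 2 N : ℕ) : ℝ) ≤
      2 * Real.logb 2 ((N : ℝ) - 2 ^ (⌊Real.logb 2 ((N : ℝ) - 1)⌋.toNat) + 1) + 2 := by
  set k := Nat.log 2 (N - 1) with hkdef
  have hcast : ((N : ℝ) - 1) = ((N - 1 : ℕ) : ℝ) := by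
    rw [Nat.cast_sub (by omega)]; norm_num
  have hfloor : ⌊Real.logb 2 ((N : ℝ) - 1)⌋.toNat = k := by
    rw [hcast, show (2:ℝ) = ((2:ℕ):ℝ) by norm_num,
      Real.floor_logb_natCast (Nat.cast_nonneg _), Int.log_natCast]
    simp
    exact hkdef.symm
  rw [hfloor]
  have hk1 : 2 ^ k ≤ N - 1 := Nat.pow_log_le_self 2 (by omega)
  have hk2 : N - 1 < 2 ^ (k + 1) := Nat.lt_pow_succ_log_self (by norm_num) _
  set m := N - 2 ^ k with hmdef
  have hm1 : 1 ≤ m := by omega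
  have hm2 : m ≤ 2 ^ k := by
    have : (2:ℕ) ^ (k + 1) = 2 * 2 ^ k := by ring
    omega
  have hNm : N = 2 ^ k + m := by omega
  have hkey : 2 ^ (2 * (Nat.digits 2 N).sum + padicValNat 2 N) ≤ 4 * (m + 1) ^ 2 := by
    rw [hNm]; exact key k m hm1 hm2
  -- cast to reals
  have hkeyR : (2:ℝ) ^ (2 * (Nat.digits 2 N).sum + padicValNat 2 N) ≤ 4 * ((m:ℝ) + 1) ^ 2 := by
    have := (Nat.cast_le (α := ℝ)).mpr hkey
    push_cast at this
    linarith
  set L := 2 * (Nat.digits 2 N).sum + padicValNat 2 N with hL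
  have hinner : (N : ℝ) - 2 ^ k + 1 = (m : ℝ) + 1 := by
    have : ((2:ℕ) ^ k : ℝ) ≤ (N : ℝ) := by
      exact_mod_cast Nat.le_of_lt (by omega : 2 ^ k < N)
    rw [hNm]; push_cast; ring
  rw [hinner]
  have hm1R : (1:ℝ) ≤ (m:ℝ) := by exact_mod_cast hm1
  have hlogL : (L : ℝ) = Real.logb 2 ((2:ℝ) ^ L) := by
    rw [Real.logb_pow, Real.logb_self_eq_one (by norm_num), mul_one]
  have hmono : Real.logb 2 ((2:ℝ) ^ L) ≤ Real.logb 2 (4 * ((m:ℝ) + 1) ^ 2) :=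
    (Real.logb_le_logb (by norm_num) (by positivity) (by positivity)).mpr hkeyR
  have hsplit : Real.logb 2 (4 * ((m:ℝ) + 1) ^ 2)
      = 2 + 2 * Real.logb 2 ((m:ℝ) + 1) := by
    rw [Real.logb_mul (by norm_num) (by positivity), Real.logb_pow,
      show (4:ℝ) = 2 ^ 2 by norm_num, Real.logb_pow,
      Real.logb_self_eq_one (by norm_num)]
    ring
  rw [hlogL]
  linarith [hmono, hsplit.le, hsplit.ge]
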